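/- The set of edges {{x_{1,2}, x_{2,1}}, {x_{2,3}, x_{3,2}}, ..., {x_{m-1,m}, x_{m,m-1}}} is an induced matching of size m-1 in G(m,n), whenever 2 ≤ m ≤ n. -/

import Mathlib

/-- The graph `G(m,n)`: vertices are pairs `(i,j)` (0-indexed, corresponding to
`x_{i+1,j+1}`), and `x_{i,j} ~ x_{k,l}` iff (`i < k` and `j > l`) or (`i > k` and `j < l`). -/
def gridGraph (m n : ℕ) : SimpleGraph (Fin m × Fin n) where
  Adj u v := (u.1 < v.1 ∧ v.2 < u.2) ∨ (v.1 < u.1 ∧ u.2 < v.2)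
  symm := ⟨fun u v h => Or.symm h⟩
  loopless := ⟨fun u h => by rcases h with ⟨h, -⟩ | ⟨h, -⟩ <;> exact absurd h (lt_irrefl _)⟩

/-- `M` is an induced matching of the induced subgraph of `G` on `A`:
a set of pairwise disjoint edges of `G` with all endpoints in `A`, such that the only
adjacencies among the endpoints are the edges of `M` themselves. -/
def IsInducedMatchingOn {V : Type*} (G : SimpleGraph V) (A : Set V) (M : Set (Sym2 V)) :
    Prop :=
  (∀ e ∈ M, ∀ v ∈ e, v ∈ A) ∧
  (∀ e ∈ M, ∃ u v, G.Adj u v ∧ e = s(u, v)) ∧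
  (∀ e ∈ M, ∀ f ∈ M, e ≠ f → ∀ v ∈ e, v ∉ f) ∧
  (∀ u v : V, (∃ e ∈ M, u ∈ e) → (∃ e ∈ M, v ∈ e) → G.Adj u v → s(u, v) ∈ M)

/-- for `2 ≤ m ≤ n`, the edges `{x_{t,t+1}, x_{t+1,t}}` for `t = 1,…,m-1`
form an induced matching of size `m - 1` in `G(m,n)`.  (0-indexed: the edge joins
`(t, t+1)` and `(t+1, t)` for `t = 0,…,m-2`.) -/
theorem stmt5 (m n : ℕ) (hm : 2 ≤ m) (hmn : m ≤ n)
    (M : Set (Sym2 (Fin m × Fin n)))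
    (hM : M = {e | ∃ t : ℕ, ∃ ht : t + 1 < m,
      e = s((((⟨t, by omega⟩ : Fin m), (⟨t + 1, by omega⟩ : Fin n)) : Fin m × Fin n),
            (((⟨t + 1, ht⟩ : Fin m), (⟨t, by omega⟩ : Fin n)) : Fin m × Fin n))}) :
    IsInducedMatchingOn (gridGraph m n) Set.univ M ∧ M.ncard = m - 1 := by
  have hm0 : 0 < m := by omega
  have hn0 : 0 < n := by omega
  constructor
  · refine ⟨fun e _ v _ => trivial, ?_, ?_, ?_⟩
    · rintro e he
      rw [hM] at he
      obtain ⟨t, ht, rfl⟩ := he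
      exact ⟨_, _, Or.inl ⟨by simp [Fin.lt_def], by simp [Fin.lt_def]⟩, rfl⟩
    · rintro e he f hf hne v hv hvf
      rw [hM] at he hf
      obtain ⟨t, ht, rfl⟩ := he
      obtain ⟨s, hs, rfl⟩ := hf
      simp only [Sym2.mem_iff] at hv hvf
      have hts : t = s := by
        rcases hv with rfl | rfl <;> rcases hvf with h | h <;>
          simp only [Prod.mk.injEq, Fin.mk.injEq] at h <;> omega
      subst hts
      exact hne rfl
    · rintro u v ⟨e, he, hu⟩ ⟨f, hf, hv⟩ hadj
      rw [hM] at he hf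
      obtain ⟨t, ht, rfl⟩ := he
      obtain ⟨s, hs, rfl⟩ := hf
      rw [hM]
      simp only [Sym2.mem_iff] at hu hv
      rcases hu with rfl | rfl <;> rcases hv with rfl | rfl <;>
        simp only [gridGraph, Fin.lt_def, Prod.fst, Prod.snd] at hadj
      · omega
      · obtain rfl : t = s := by omega
        exact ⟨t, ht, rfl⟩
      · obtain rfl : t = s := by omega
        exact ⟨t, ht, Sym2.eq_swap⟩
      · omega
  · have key : M = ↑(Finset.image (fun t : Fin (m - 1) => s(
        (((⟨t.1, by have := t.isLt; omega⟩ : Fin m),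
          (⟨t.1 + 1, by have := t.isLt; omega⟩ : Fin n)) : Fin m × Fin n),
        (((⟨t.1 + 1, by have := t.isLt; omega⟩ : Fin m),
          (⟨t.1, by have := t.isLt; omega⟩ : Fin n)) : Fin m × Fin n))) Finset.univ) := by
      ext e
      rw [hM]
      simp only [Finset.coe_image, Finset.coe_univ, Set.image_univ, Set.mem_range,
        Set.mem_setOf_eq]
      constructor
      · rintro ⟨t, ht, rfl⟩
        exact ⟨⟨t, by omega⟩, rfl⟩
      · rintro ⟨t, rfl⟩
        exact ⟨t.1, by have := t.isLt; omega, rfl⟩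
    rw [key, Set.ncard_coe_finset, Finset.card_image_of_injective, Finset.card_univ,
      Fintype.card_fin]
    intro a b hab
    simp only [Sym2.eq, Sym2.rel_iff', Prod.mk.injEq, Fin.mk.injEq, Prod.swap_prod_mk] at hab
    exact Fin.ext (by omega)
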